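/- Let α, β : ℤ × ℤ → ℂ be double sequences such that β is antisymmetric (β(n,k) = −β(k,n) for all n,k), α(n,n) ≠ 0 for every integer n, and β(n,k) ≠ 0 whenever n ≠ k. Then α and β satisfy the triple sum identity (TSI) if and only if they satisfy the quintuple sum identity (QSI). -/
import Mathlib


/-- Proposition 3.4 (Wang–Ma): for antisymmetric `β` with `α n n ≠ 0` and
`β n k ≠ 0` for `n ≠ k`, the triple sum identity and the quintuple sum
identity are equivalent. -/
theorem TSI_iff_QSI
    (α β : ℤ → ℤ → ℂ)
    (hanti : ∀ n k : ℤ, β n k = -β k n)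
    (hα : ∀ n : ℤ, α n n ≠ 0)
    (hβ : ∀ n k : ℤ, n ≠ k → β n k ≠ 0) :
    (∀ n k p q : ℤ, α n p * β q k + α n q * β k p + α n k * β p q = 0)
      ↔ (∀ x y p q : ℤ,
          α x p * α p y * β x p * β q y + α x p * α p x * β q y * β p y
            - α x y * α p y * β x p * β q p - α x y * α p q * β x p * β p y
            - α x x * α p p * β q y * β p y = 0) := by
  have hβ0 : ∀ n : ℤ, β n n = 0 := fun n => by
    linear_combination (1/2 : ℂ) * hanti n n
  constructor
  · intro h x y p q
    linear_combination (β x p * α x y) * h p y p q + (β q y * α x p) * h p y x p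
      - (β q y * α p p) * h x y x p - (α x y * α p y * β x p) * hanti p q
      - (α x y * α p q * β x p) * hanti y p
  · intro h
    have E1 : ∀ x y p : ℤ, β x p * (α x p * α p y - α x y * α p p)
        + β p y * (α x p * α p x - α x x * α p p) = 0 := by
      intro x y p
      by_cases hyp : y = p
      · subst hyp
        rw [hβ0]
        ring
      · have hb : β p y ≠ 0 := hβ p y (fun hh => hyp hh.symm)
        have h2 : β p y * (β x p * (α x p * α p y - α x y * α p p)
            + β p y * (α x p * α p x - α x x * α p p)) = 0 := by
          linear_combination h x y p p + (α x y * α p y * β x p) * hβ0 p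
        exact (mul_eq_zero.mp h2).resolve_left hb
    have T : ∀ p y q : ℤ, α p p * β q y + α p q * β y p + α p y * β p q = 0 := by
      intro p y q
      by_cases hyp : y = p
      · subst hyp
        linear_combination (α y y) * hanti q y + (α y q) * hβ0 y
      · have hb : β y p ≠ 0 := hβ y p hyp
        have h2 : β y p * (α y y * (α p p * β q y + α p q * β y p + α p y * β p q)) = 0 := by
          linear_combination h y y p q - (β q y) * E1 y y p
            + (β y p * α y y * α p q) * hanti y p
            + (β y p * α y y * α p y) * hanti p q
        exact ((mul_eq_zero.mp h2).resolve_left hb |> mul_eq_zero.mp).resolve_left (hα y)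
    intro n k p q
    have key : α n n * (α n p * β q k + α n q * β k p + α n k * β p q) = 0 := by
      linear_combination (α n p) * T n k q + (α n q) * T n p k + (α n k) * T n q p
        - (α n p * α n q) * hanti k n - (α n p * α n k) * hanti n q
        - (α n q * α n k) * hanti p n
    exact (mul_eq_zero.mp key).resolve_left (hα n)
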